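/- Let A be a unital C*-algebra and a ∈ A. Then v(a)³ ≤ (1/4)·‖a*a + aa*‖·‖a‖ + (1/2)·‖a²‖·‖a‖. -/

import Mathlib

open scoped ComplexOrder

/-- A state on a unital `C*`-algebra: a positive linear functional `φ` (equivalently, since the
algebra is complete, `φ (star b * b) ≥ 0` for all `b`) with `φ 1 = 1`. -/
def IsState {A : Type*} [CStarAlgebra A] (φ : A →ₗ[ℂ] ℂ) : Prop :=
  (∀ b : A, 0 ≤ φ (star b * b)) ∧ φ 1 = 1

/-- The numerical radius of an element of a unital `C*`-algebra:
`v(a) = sup { |φ(a)| : φ a state on A }`. -/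
noncomputable def numRadius {A : Type*} [CStarAlgebra A] (a : A) : ℝ :=
  sSup {r : ℝ | ∃ φ : A →ₗ[ℂ] ℂ, IsState φ ∧ r = ‖φ a‖}

section helpers

variable {A : Type*} [CStarAlgebra A] [PartialOrder A] [StarOrderedRing A] {φ : A →ₗ[ℂ] ℂ}

lemma state_nonneg (hφ : IsState φ) {x : A} (hx : 0 ≤ x) : 0 ≤ φ x := by
  have hs : CFC.sqrt x * CFC.sqrt x = x := CFC.sqrt_mul_sqrt_self x hx
  have hsa : IsSelfAdjoint (CFC.sqrt x) := (CFC.sqrt_nonneg (a := x)).isSelfAdjoint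
  have := hφ.1 (CFC.sqrt x)
  rwa [hsa.star_eq, hs] at this

lemma state_mono (hφ : IsState φ) {x y : A} (h : x ≤ y) : φ x ≤ φ y := by
  have := state_nonneg hφ (sub_nonneg.2 h)
  rw [map_sub] at this
  exact sub_nonneg.1 this

lemma state_im (hφ : IsState φ) {h : A} (hh : IsSelfAdjoint h) : (φ h).im = 0 := by
  have h1 : 0 ≤ φ (star (1 + h) * (1 + h)) := hφ.1 _
  have h2 : 0 ≤ φ (star h * h) := hφ.1 _
  have e : star (1 + h) * (1 + h) = 1 + h + h + star h * h := by
    rw [star_add, star_one, hh.star_eq]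
    noncomm_ring
  rw [e, map_add, map_add, map_add, hφ.2] at h1
  have i1 : (φ (star h * h)).im = 0 := ((Complex.le_def.1 h2).2).symm
  have i2 := (Complex.le_def.1 h1).2
  simp [Complex.add_im, i1] at i2
  linarith

lemma state_real (hφ : IsState φ) {h : A} (hh : IsSelfAdjoint h) :
    φ h = ((φ h).re : ℂ) :=
  Complex.ext rfl (by simp [state_im hφ hh])

lemma state_sq (hφ : IsState φ) {h : A} (hh : IsSelfAdjoint h) :
    ((φ h).re) ^ 2 ≤ (φ (h * h)).re := by
  set t : ℝ := (φ h).re with ht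
  have hfh : φ h = (t : ℂ) := state_real hφ hh
  have hg : star (h - (t : ℂ) • 1) = h - (t : ℂ) • 1 := by
    simp [star_sub, hh.star_eq, star_smul, Complex.conj_ofReal]
  have h0 : 0 ≤ φ (star (h - (t : ℂ) • 1) * (h - (t : ℂ) • 1)) := hφ.1 _
  rw [hg] at h0
  have e : (h - (t : ℂ) • 1) * (h - (t : ℂ) • 1)
      = h * h - (t : ℂ) • h - (t : ℂ) • h + ((t : ℂ) * (t : ℂ)) • 1 := by
    simp only [sub_mul, mul_sub, smul_mul_assoc, mul_smul_comm, one_mul, mul_one,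
      smul_smul, smul_sub]
    abel
  rw [e] at h0
  simp only [map_add, map_sub, map_smul, hφ.2, hfh, smul_eq_mul, mul_one] at h0
  have h1 := (Complex.le_def.1 h0).1
  simp only [Complex.add_re, Complex.sub_re, Complex.mul_re, Complex.ofReal_re,
    Complex.ofReal_im, Complex.zero_re] at h1
  nlinarith [h1]

lemma state_le_norm (hφ : IsState φ) {x : A} (hx : 0 ≤ x) : (φ x).re ≤ ‖x‖ := by
  have hsa : IsSelfAdjoint x := hx.isSelfAdjoint
  have hle : x ≤ algebraMap ℝ A ‖x‖ := hsa.le_algebraMap_norm_self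
  have h2 := state_mono hφ hle
  have e : φ (algebraMap ℝ A ‖x‖) = (‖x‖ : ℂ) := by
    rw [IsScalarTower.algebraMap_apply ℝ ℂ A, Algebra.algebraMap_eq_smul_one, map_smul, hφ.2]
    simp
  rw [e] at h2
  simpa using (Complex.le_def.1 h2).1

/-- Per-state bound. -/
lemma state_key (a : A) (hφ : IsState φ) :
    ‖φ a‖ ^ 2 ≤ (1 / 4) * ‖star a * a + a * star a‖ + (1 / 2) * ‖a ^ 2‖ ∧
      ‖φ a‖ ≤ ‖a‖ := by
  rcases eq_or_ne (φ a) 0 with h0 | h0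
  · constructor <;> simp [h0] <;> positivity
  set r : ℝ := ‖φ a‖ with hr
  have hrpos : 0 < r := by simpa [hr] using (norm_pos_iff.mpr h0)
  set z : ℂ := (r : ℂ) / φ a with hz
  have hz1 : z * φ a = (r : ℂ) := div_mul_cancel₀ _ h0
  have hzabs : ‖z‖ = 1 := by
    rw [hz, norm_div, Complex.norm_real, Real.norm_eq_abs, abs_of_pos hrpos, ← hr, div_self hrpos.ne']
  have hzz : star z * z = 1 := by
    rw [Complex.star_def, mul_comm, Complex.mul_conj, Complex.normSq_eq_norm_sq, hzabs]
    norm_num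
  set b : A := z • a with hb
  set h : A := (2 : ℂ)⁻¹ • (b + star b) with hhdef
  have h2sa : IsSelfAdjoint ((2 : ℂ)⁻¹) := by
    rw [IsSelfAdjoint]; simp
  have hh : IsSelfAdjoint h := h2sa.smul (IsSelfAdjoint.add_star_self b)
  set k : A := (-(Complex.I) / 2) • (b - star b) with hkdef
  have hk : IsSelfAdjoint k := by
    rw [hkdef, IsSelfAdjoint, star_smul, star_sub, star_star]
    have h1 : star (-(Complex.I) / 2) = Complex.I / 2 := by
      simp [Complex.star_def, map_div₀]
    have h2 : star b - b = -(b - star b) := by abel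
    rw [h1, h2, smul_neg, ← neg_smul]
    congr 1
    ring
  have hbhk : h + Complex.I • k = b := by
    rw [hhdef, hkdef, smul_smul]
    have hI : Complex.I * (-(Complex.I) / 2) = (2 : ℂ)⁻¹ := by
      field_simp
      simp [Complex.I_sq]
    rw [hI, ← smul_add]
    have : (b + star b) + (b - star b) = (2 : ℂ) • b := by
      rw [two_smul]; abel
    rw [this, smul_smul]
    norm_num
  have hφb : φ b = (r : ℂ) := by rw [hb, map_smul, smul_eq_mul, hz1]
  have hφh : (φ h).re = r := by
    have e1 : φ b = φ h + Complex.I * φ k := by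
      rw [← hbhk]
      simp
    have e2 := congrArg Complex.re e1
    rw [hφb] at e2
    simp only [Complex.ofReal_re, Complex.add_re, Complex.mul_re, Complex.I_re, Complex.I_im,
      state_im hφ hk, zero_mul, one_mul, mul_zero, sub_zero] at e2
    linarith [e2]
  have hsq : r ^ 2 ≤ (φ (h * h)).re := by
    rw [← hφh]; exact state_sq hφ hh
  have hnn : (0 : A) ≤ h * h := by
    have := star_mul_self_nonneg h
    rwa [hh.star_eq] at this
  have hlen : (φ (h * h)).re ≤ ‖h * h‖ := state_le_norm hφ hnn
  -- norm computations
  have hbb : b * b = (z * z) • (a * a) := by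
    rw [hb, smul_mul_smul_comm]
  have hbbn : ‖b * b‖ = ‖a ^ 2‖ := by
    rw [hbb, norm_smul, pow_two]
    simp [hzabs]
  have hmix : star b * b + b * star b = star a * a + a * star a := by
    rw [hb, star_smul, smul_mul_smul_comm, smul_mul_smul_comm, hzz,
      show z * star z = 1 from by rw [mul_comm]; exact hzz]
    simp
  have hexp : h * h = ((2:ℂ)⁻¹ * (2:ℂ)⁻¹) • ((b * b + star b * star b)
      + (star b * b + b * star b)) := by
    rw [hhdef, smul_mul_smul_comm]
    congr 1
    noncomm_ring
  have hDn : ‖h * h‖ ≤ (1 / 4) * ‖star a * a + a * star a‖ + (1 / 2) * ‖a ^ 2‖ := by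
    rw [hexp, norm_smul]
    have h4 : ‖(2:ℂ)⁻¹ * (2:ℂ)⁻¹‖ = (4:ℝ)⁻¹ := by norm_num
    rw [h4]
    have hsb : ‖star b * star b‖ = ‖a ^ 2‖ := by
      rw [show star b * star b = star (b * b) from (star_mul b b).symm, norm_star, hbbn]
    have hstep : ‖(b * b + star b * star b) + (star b * b + b * star b)‖
        ≤ 2 * ‖a ^ 2‖ + ‖star a * a + a * star a‖ := by
      calc ‖(b * b + star b * star b) + (star b * b + b * star b)‖
          ≤ ‖b * b + star b * star b‖ + ‖star b * b + b * star b‖ := norm_add_le _ _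
        _ ≤ (‖b * b‖ + ‖star b * star b‖) + ‖star a * a + a * star a‖ := by
            rw [hmix]; gcongr; exact norm_add_le _ _
        _ = 2 * ‖a ^ 2‖ + ‖star a * a + a * star a‖ := by rw [hbbn, hsb]; ring
    calc (4:ℝ)⁻¹ * ‖(b * b + star b * star b) + (star b * b + b * star b)‖
        ≤ (4:ℝ)⁻¹ * (2 * ‖a ^ 2‖ + ‖star a * a + a * star a‖) := by gcongr
      _ = (1 / 4) * ‖star a * a + a * star a‖ + (1 / 2) * ‖a ^ 2‖ := by ring
  have hbn : ‖b‖ = ‖a‖ := by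
    rw [hb, norm_smul]
    simp [hzabs]
  have hhn : ‖h‖ ≤ ‖a‖ := by
    rw [hhdef, norm_smul]
    have : ‖b + star b‖ ≤ 2 * ‖a‖ := by
      calc ‖b + star b‖ ≤ ‖b‖ + ‖star b‖ := norm_add_le _ _
        _ = 2 * ‖a‖ := by rw [norm_star, hbn]; ring
    have h2 : ‖(2:ℂ)⁻¹‖ = (2:ℝ)⁻¹ := by norm_num
    rw [h2]
    nlinarith [this]
  constructor
  · calc r ^ 2 ≤ (φ (h * h)).re := hsq
      _ ≤ ‖h * h‖ := hlen
      _ ≤ (1 / 4) * ‖star a * a + a * star a‖ + (1 / 2) * ‖a ^ 2‖ := hDn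
  · have hr2 : r ^ 2 ≤ ‖a‖ * ‖a‖ := by
      calc r ^ 2 ≤ ‖h * h‖ := hsq.trans hlen
        _ ≤ ‖h‖ * ‖h‖ := norm_mul_le _ _
        _ ≤ ‖a‖ * ‖a‖ := mul_le_mul hhn hhn (norm_nonneg _) (norm_nonneg _)
    nlinarith [hrpos.le, norm_nonneg a]

end helpers

/-- Corollary 2.13:
`v(a)³ ≤ (1/4)·‖a*a + aa*‖·‖a‖ + (1/2)·‖a²‖·‖a‖`. -/
theorem numRadius_cube_le_quarter_half
    {A : Type*} [CStarAlgebra A] (a : A) :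
    numRadius a ^ 3 ≤
      (1 / 4) * ‖star a * a + a * star a‖ * ‖a‖ + (1 / 2) * ‖a ^ 2‖ * ‖a‖ := by
  letI := CStarAlgebra.spectralOrder A
  letI := CStarAlgebra.spectralOrderedRing A
  set D : ℝ := (1 / 4) * ‖star a * a + a * star a‖ + (1 / 2) * ‖a ^ 2‖ with hD
  have hD0 : (0:ℝ) ≤ D := by positivity
  set S : Set ℝ := {r : ℝ | ∃ φ : A →ₗ[ℂ] ℂ, IsState φ ∧ r = ‖φ a‖} with hS
  have hub1 : ∀ r ∈ S, r ≤ Real.sqrt D := by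
    rintro r ⟨φ, hφ, rfl⟩
    exact Real.le_sqrt_of_sq_le (state_key a hφ).1
  have hub2 : ∀ r ∈ S, r ≤ ‖a‖ := by
    rintro r ⟨φ, hφ, rfl⟩
    exact (state_key a hφ).2
  have h1 : numRadius a ≤ Real.sqrt D := Real.sSup_le hub1 (Real.sqrt_nonneg D)
  have h2 : numRadius a ≤ ‖a‖ := Real.sSup_le hub2 (norm_nonneg a)
  have h0 : 0 ≤ numRadius a :=
    Real.sSup_nonneg (by rintro r ⟨φ, hφ, rfl⟩; exact norm_nonneg _)
  have key : numRadius a ^ 3 ≤ D * ‖a‖ := by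
    have : numRadius a ^ 3 ≤ Real.sqrt D * Real.sqrt D * ‖a‖ := by
      have m1 : numRadius a * numRadius a ≤ Real.sqrt D * Real.sqrt D :=
        mul_le_mul h1 h1 h0 (Real.sqrt_nonneg D)
      calc numRadius a ^ 3 = numRadius a * numRadius a * numRadius a := by ring
        _ ≤ Real.sqrt D * Real.sqrt D * ‖a‖ :=
            mul_le_mul m1 h2 h0 (by positivity)
    rwa [Real.mul_self_sqrt hD0] at this
  calc numRadius a ^ 3 ≤ D * ‖a‖ := key
    _ = (1 / 4) * ‖star a * a + a * star a‖ * ‖a‖ + (1 / 2) * ‖a ^ 2‖ * ‖a‖ := by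
        rw [hD]; ring
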